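/- There is no quadruple of pairwise distinct pairs $(p_i,e_i)$, $i=1,2,3,4$, with $p_1<p_2<p_3<p_4$ primes and $e_i\geq 1$, such that $C(p_1,e_1)=C(p_2,e_2)=C(p_3,e_3)=C(p_4,e_4)$, where $C(q,n)=q^{2-n}/(q^2-1)$. -/

import Mathlib

noncomputable def C (q n : ℕ) : ℚ := (q : ℚ) ^ ((2 : ℤ) - n) / ((q : ℚ) ^ 2 - 1)

/-- From `C p e = C q f` for distinct primes, clearing denominators gives a
natural-number equation. -/
lemma C_eq_nat {p q e f : ℕ} (hp : p.Prime) (hq : q.Prime) (h : C p e = C q f) :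
    p ^ 2 * q ^ f * (q ^ 2 - 1) = q ^ 2 * p ^ e * (p ^ 2 - 1) := by
  have hp2 := hp.two_le
  have hq2 := hq.two_le
  have hp0 : (p : ℚ) ≠ 0 := by exact_mod_cast hp.pos.ne'
  have hq0 : (q : ℚ) ≠ 0 := by exact_mod_cast hq.pos.ne'
  have hpc : (2:ℚ) ≤ (p:ℚ) := by exact_mod_cast hp2
  have hqc : (2:ℚ) ≤ (q:ℚ) := by exact_mod_cast hq2
  have hps : ((p:ℚ)^2 - 1) ≠ 0 := by nlinarith
  have hqs : ((q:ℚ)^2 - 1) ≠ 0 := by nlinarith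
  unfold C at h
  rw [zpow_sub₀ hp0, zpow_sub₀ hq0] at h
  field_simp at h
  rw [zpow_natCast, zpow_natCast] at h
  have h1p : (1:ℕ) ≤ p^2 := Nat.one_le_pow _ _ hp.pos
  have h1q : (1:ℕ) ≤ q^2 := Nat.one_le_pow _ _ hq.pos
  have : ((p ^ 2 * q ^ f * (q ^ 2 - 1) : ℕ) : ℚ) = ((q ^ 2 * p ^ e * (p ^ 2 - 1) : ℕ) : ℚ) := by
    push_cast [Nat.cast_sub h1p, Nat.cast_sub h1q]
    linear_combination h
  exact_mod_cast this

lemma not_dvd_sq_sub_one {p : ℕ} (hp : p.Prime) : ¬ p ∣ p ^ 2 - 1 := by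
  intro hd
  have h1 : p ∣ p ^ 2 - (p ^ 2 - 1) := Nat.dvd_sub (dvd_pow_self p two_ne_zero) hd
  rw [Nat.sub_sub_self (Nat.one_le_pow _ _ hp.pos)] at h1
  exact hp.one_lt.ne' (Nat.dvd_one.mp h1)

/-- Key pair lemma. -/
lemma pair_aux {p q e f : ℕ} (hp : p.Prime) (hq : q.Prime) (hne : p ≠ q)
    (h : C p e = C q f) :
    2 ≤ e ∧ p ^ (e - 2) ∣ q ^ 2 - 1 ∧ ¬(e = 2 ∧ f = 2) := by
  have hEn := C_eq_nat hp hq h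
  have cpq : Nat.Coprime p q := (Nat.coprime_primes hp hq).2 hne
  have cps : Nat.Coprime p (p ^ 2 - 1) :=
    (Nat.Prime.coprime_iff_not_dvd hp).2 (not_dvd_sq_sub_one hp)
  -- e ≥ 2
  have hd1 : p ^ 2 ∣ p ^ e * (q ^ 2 * (p ^ 2 - 1)) := by
    have : p ^ 2 ∣ p ^ 2 * q ^ f * (q ^ 2 - 1) :=
      (dvd_mul_right _ _).trans (dvd_mul_right _ _)
    rw [hEn] at this
    calc p ^ 2 ∣ q ^ 2 * p ^ e * (p ^ 2 - 1) := this
      _ = p ^ e * (q ^ 2 * (p ^ 2 - 1)) := by ring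
  have cop : Nat.Coprime (p ^ 2) (q ^ 2 * (p ^ 2 - 1)) :=
    Nat.Coprime.pow_left 2 ((cpq.pow_right 2).mul_right cps)
  have hpe : p ^ 2 ∣ p ^ e := cop.dvd_of_dvd_mul_right hd1
  have he2 : 2 ≤ e := (Nat.pow_dvd_pow_iff_le_right hp.one_lt).1 hpe
  refine ⟨he2, ?_, ?_⟩
  · -- p^(e-2) ∣ q^2 - 1
    have hesplit : p ^ e = p ^ 2 * p ^ (e - 2) := by
      rw [← pow_add]; congr 1; omega
    have hc : q ^ f * (q ^ 2 - 1) = p ^ (e - 2) * (q ^ 2 * (p ^ 2 - 1)) := by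
      apply Nat.eq_of_mul_eq_mul_left (pow_pos hp.pos 2)
      calc p ^ 2 * (q ^ f * (q ^ 2 - 1)) = p ^ 2 * q ^ f * (q ^ 2 - 1) := by ring
        _ = q ^ 2 * p ^ e * (p ^ 2 - 1) := hEn
        _ = p ^ 2 * (p ^ (e - 2) * (q ^ 2 * (p ^ 2 - 1))) := by rw [hesplit]; ring
    have hdvd : p ^ (e - 2) ∣ q ^ f * (q ^ 2 - 1) := by
      rw [hc]; exact dvd_mul_right _ _
    exact ((cpq.pow_left _).pow_right f).dvd_of_dvd_mul_left hdvd
  · -- not both exponents 2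
    rintro ⟨rfl, rfl⟩
    have hcancel : q ^ 2 - 1 = p ^ 2 - 1 := by
      apply Nat.eq_of_mul_eq_mul_left (Nat.mul_pos (pow_pos hp.pos 2) (pow_pos hq.pos 2))
      calc p ^ 2 * q ^ 2 * (q ^ 2 - 1) = p ^ 2 * q ^ 2 * (q ^ 2 - 1) := rfl
        _ = q ^ 2 * p ^ 2 * (p ^ 2 - 1) := hEn
        _ = p ^ 2 * q ^ 2 * (p ^ 2 - 1) := by ring
    have h1p : (1:ℕ) ≤ p ^ 2 := Nat.one_le_pow _ _ hp.pos
    have h1q : (1:ℕ) ≤ q ^ 2 := Nat.one_le_pow _ _ hq.pos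
    have hsq : q ^ 2 = p ^ 2 := by omega
    exact hne ((Nat.pow_left_injective two_ne_zero hsq).symm)

lemma two_big {p1 pj pk : ℕ} (h1 : 2 ≤ p1) (hj : p1 < pj) (hk : p1 < pk)
    (hd : pj * pk ∣ p1 ^ 2 - 1) : False := by
  have h4 : 4 ≤ p1 ^ 2 := by nlinarith
  have hle : pj * pk ≤ p1 ^ 2 - 1 := Nat.le_of_dvd (by omega) hd
  have l1 : pj * pk < p1 ^ 2 := lt_of_le_of_lt hle (Nat.sub_lt (by omega) one_pos)
  have l2 : p1 ^ 2 < pj * pk := by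
    rw [sq]; exact Nat.mul_lt_mul'' hj hk
  exact absurd (l1.trans l2) (lt_irrefl _)

theorem stmt_19 :
    ¬ ∃ (p₁ p₂ p₃ p₄ e₁ e₂ e₃ e₄ : ℕ),
      p₁.Prime ∧ p₂.Prime ∧ p₃.Prime ∧ p₄.Prime ∧
      p₁ < p₂ ∧ p₂ < p₃ ∧ p₃ < p₄ ∧
      1 ≤ e₁ ∧ 1 ≤ e₂ ∧ 1 ≤ e₃ ∧ 1 ≤ e₄ ∧
      C p₁ e₁ = C p₂ e₂ ∧ C p₂ e₂ = C p₃ e₃ ∧ C p₃ e₃ = C p₄ e₄ := by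
  rintro ⟨p₁, p₂, p₃, p₄, e₁, e₂, e₃, e₄, hp₁, hp₂, hp₃, hp₄, h12, h23, h34,
    _, _, _, _, c12, c23, c34⟩
  have ne21 : p₂ ≠ p₁ := (h12.ne).symm
  have ne31 : p₃ ≠ p₁ := (h12.trans h23).ne'
  have ne41 : p₄ ≠ p₁ := ((h12.trans h23).trans h34).ne'
  have ne23 : p₂ ≠ p₃ := h23.ne
  have ne24 : p₂ ≠ p₄ := (h23.trans h34).ne
  have ne34 : p₃ ≠ p₄ := h34.ne
  have c13 : C p₁ e₁ = C p₃ e₃ := c12.trans c23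
  have c14 : C p₁ e₁ = C p₄ e₄ := c13.trans c34
  have c24 : C p₂ e₂ = C p₄ e₄ := c23.trans c34
  obtain ⟨he2, hd2, -⟩ := pair_aux hp₂ hp₁ ne21 c12.symm
  obtain ⟨he3, hd3, -⟩ := pair_aux hp₃ hp₁ ne31 c13.symm
  obtain ⟨he4, hd4, -⟩ := pair_aux hp₄ hp₁ ne41 c14.symm
  obtain ⟨-, -, B23⟩ := pair_aux hp₂ hp₃ ne23 c23
  obtain ⟨-, -, B24⟩ := pair_aux hp₂ hp₄ ne24 c24
  obtain ⟨-, -, B34⟩ := pair_aux hp₃ hp₄ ne34 c34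
  have key : ∀ {pj pk ej ek : ℕ}, pj.Prime → pk.Prime → pj ≠ pk →
      p₁ < pj → p₁ < pk → 2 < ej → 2 < ek →
      pj ^ (ej - 2) ∣ p₁ ^ 2 - 1 → pk ^ (ek - 2) ∣ p₁ ^ 2 - 1 → False := by
    intro pj pk ej ek hpj hpk hjk hj hk hej hek hdj hdk
    have dj : pj ∣ p₁ ^ 2 - 1 :=
      (dvd_pow_self pj (by omega : ej - 2 ≠ 0)).trans hdj
    have dk : pk ∣ p₁ ^ 2 - 1 :=
      (dvd_pow_self pk (by omega : ek - 2 ≠ 0)).trans hdk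
    have : pj * pk ∣ p₁ ^ 2 - 1 :=
      Nat.Coprime.mul_dvd_of_dvd_of_dvd ((Nat.coprime_primes hpj hpk).2 hjk) dj dk
    exact two_big hp₁.two_le hj hk this
  by_cases h2 : e₂ = 2 <;> by_cases h3 : e₃ = 2 <;> by_cases h4 : e₄ = 2
  · exact B23 ⟨h2, h3⟩
  · exact B23 ⟨h2, h3⟩
  · exact B24 ⟨h2, h4⟩
  · exact key hp₃ hp₄ ne34 (h12.trans h23) ((h12.trans h23).trans h34)
      (by omega) (by omega) hd3 hd4
  · exact B34 ⟨h3, h4⟩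
  · exact key hp₂ hp₄ ne24 h12 ((h12.trans h23).trans h34) (by omega) (by omega) hd2 hd4
  · exact key hp₂ hp₃ ne23 h12 (h12.trans h23) (by omega) (by omega) hd2 hd3
  · exact key hp₂ hp₃ ne23 h12 (h12.trans h23) (by omega) (by omega) hd2 hd3
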